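/- Let σ > 0 and let J satisfy √(1+σ) < J < √σ · ζ_σ, where ζ_σ > √((1+σ)/σ) is the unique root greater than 1 of z^σ(σ(z−1)²+1) = exp(σ(z²−1)/2) on (1,∞). Set n_s = J/√σ and g(n) = J²/n + σn + exp(H(n)) with H(n) = (J²/2)(1 − 1/n²) − σ ln n. Then g(1) > g(n_s). -/

import Mathlib

open Real

/-- `log (1+x) ≥ x - x^2` for `x ≥ 0`. -/
lemma aux_log_lb (x : ℝ) (hx : 0 ≤ x) : x - x ^ 2 ≤ Real.log (1 + x) := by
  have hpos : (0 : ℝ) < 1 + x := by linarith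
  have h1 : Real.log (1 + x)⁻¹ ≤ (1 + x)⁻¹ - 1 :=
    Real.log_le_sub_one_of_pos (by positivity)
  rw [Real.log_inv] at h1
  have hinv : (1 + x) * (1 + x)⁻¹ = 1 := mul_inv_cancel₀ (ne_of_gt hpos)
  nlinarith [sq_nonneg x, inv_nonneg.mpr hpos.le, sq_nonneg (x * (1+x)⁻¹)]

/-- third-order lower bound for `log (1+u)` for `0 < u < 1/2`. -/
lemma aux_log_lb3 (u : ℝ) (h0 : 0 < u) (h1 : u < 1/2) :
    u - u ^ 2 / 2 + u ^ 3 / 3 - u ^ 4 / (1 - u) ≤ Real.log (1 + u) := by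
  have habs : |(-u)| < 1 := by rw [abs_neg, abs_of_nonneg h0.le]; linarith
  have hs := Real.abs_log_sub_add_sum_range_le habs 3
  rw [abs_neg, abs_of_nonneg h0.le] at hs
  have hsum : (∑ i ∈ Finset.range 3, (-u) ^ (i + 1) / (i + 1))
      = -u + u ^ 2 / 2 - u ^ 3 / 3 := by
    simp [Finset.sum_range_succ]
    ring
  rw [hsum] at hs
  have h2 : (1 : ℝ) - (-u) = 1 + u := by ring
  rw [h2] at hs
  have := abs_le.mp hs
  have h3 : (-u) ^ (3+1) = u ^ 4 := by ring
  nlinarith [this.1, this.2]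

set_option maxHeartbeats 1000000 in
theorem stmt_7 (σ J ζ : ℝ) (hσ : 0 < σ)
    (hζ1 : Real.sqrt ((1 + σ) / σ) < ζ)
    (hζroot : ζ ^ σ * (σ * (ζ - 1) ^ 2 + 1) = Real.exp (σ * (ζ ^ 2 - 1) / 2))
    (hζuniq : ∀ z : ℝ, 1 < z →
      z ^ σ * (σ * (z - 1) ^ 2 + 1) = Real.exp (σ * (z ^ 2 - 1) / 2) → z = ζ)
    (hJ1 : Real.sqrt (1 + σ) < J) (hJ2 : J < Real.sqrt σ * ζ)
    (H g : ℝ → ℝ)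
    (hH : ∀ n : ℝ, 0 < n → H n = J ^ 2 / 2 * (1 - 1 / n ^ 2) - σ * Real.log n)
    (hg : ∀ n : ℝ, 0 < n → g n = J ^ 2 / n + σ * n + Real.exp (H n)) :
    g 1 > g (J / Real.sqrt σ) := by
  have hσs : 0 < Real.sqrt σ := Real.sqrt_pos.mpr hσ
  set z := J / Real.sqrt σ with hzdef
  have hJpos : 0 < J := lt_of_le_of_lt (Real.sqrt_nonneg _) hJ1
  have hsq : Real.sqrt σ < Real.sqrt (1 + σ) := by
    apply Real.sqrt_lt_sqrt hσ.le; linarith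
  have hz1 : 1 < z := by
    rw [hzdef, lt_div_iff₀ hσs]; nlinarith
  have hzpos : 0 < z := by linarith
  have hzζ : z < ζ := by
    rw [hzdef, div_lt_iff₀ hσs]; linarith [hJ2]
  have hJsq : J ^ 2 = σ * z ^ 2 := by
    rw [hzdef, div_pow, Real.sq_sqrt hσ.le]
    field_simp
  -- value of g at 1
  have hg1 : g 1 = J ^ 2 + σ + 1 := by
    rw [hg 1 one_pos, hH 1 one_pos]
    simp
  -- value of g at z
  have hzσpos : (0 : ℝ) < z ^ σ := Real.rpow_pos_of_pos hzpos σ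
  have hHz : H z = σ * (z ^ 2 - 1) / 2 - σ * Real.log z := by
    rw [hH z hzpos, hJsq]
    have hz2 : z ^ 2 ≠ 0 := by positivity
    field_simp
  have hexpz : Real.exp (H z) = Real.exp (σ * (z ^ 2 - 1) / 2) / z ^ σ := by
    rw [hHz, Real.exp_sub]
    congr 1
    rw [Real.rpow_def_of_pos hzpos]
    ring_nf
  have hgz : g z = 2 * (σ * z) + Real.exp (σ * (z ^ 2 - 1) / 2) / z ^ σ := by
    rw [hg z hzpos, hexpz, hJsq]
    field_simp
    ring
  -- key inequality : F z > 0
  have key : Real.exp (σ * (z ^ 2 - 1) / 2) < z ^ σ * (σ * (z - 1) ^ 2 + 1) := by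
    by_contra hcon
    push_neg at hcon
    set F : ℝ → ℝ := fun t => t ^ σ * (σ * (t - 1) ^ 2 + 1)
        - Real.exp (σ * (t ^ 2 - 1) / 2) with hF
    have hFcont : Continuous F := by
      apply Continuous.sub
      · exact (Real.continuous_rpow_const hσ.le).mul
          ((continuous_const.mul ((continuous_id.sub continuous_const).pow 2)).add
            continuous_const)
      · exact Real.continuous_exp.comp
          ((continuous_const.mul ((continuous_pow 2).sub continuous_const)).div_const 2)
    -- witness point
    set u : ℝ := min ((z - 1) / 2) (1 / (2 * (4 + 3 * σ))) with hu
    have hupos : 0 < u := lt_min (by linarith) (by positivity)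
    have huδ : u < 1 / (4 + 3 * σ) := by
      have h1 : u ≤ 1 / (2 * (4 + 3 * σ)) := min_le_right _ _
      have h2 : 1 / (2 * (4 + 3 * σ)) < 1 / (4 + 3 * σ) := by
        apply div_lt_div_of_pos_left one_pos (by linarith) (by linarith)
      linarith
    have hu8 : u ≤ 1 / 8 := by
      have h1 : u ≤ 1 / (2 * (4 + 3 * σ)) := min_le_right _ _
      have h2 : 1 / (2 * (4 + 3 * σ)) ≤ 1 / 8 := by
        apply div_le_div_of_nonneg_left one_pos.le (by norm_num) (by linarith)
      linarith
    have hwz : 1 + u < z := by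
      have := min_le_left ((z - 1) / 2) (1 / (2 * (4 + 3 * σ)))
      have : u ≤ (z - 1) / 2 := this
      linarith
    -- F (1+u) > 0
    have hFw : 0 < F (1 + u) := by
      have hwpos : (0 : ℝ) < 1 + u := by linarith
      have hxpos : (0 : ℝ) < σ * ((1 + u) - 1) ^ 2 + 1 := by positivity
      have hlog1 : u - u ^ 2 / 2 + u ^ 3 / 3 - u ^ 4 / (1 - u) ≤ Real.log (1 + u) :=
        aux_log_lb3 u hupos (by linarith)
      have hlog2 : σ * u ^ 2 - (σ * u ^ 2) ^ 2 ≤ Real.log (1 + σ * u ^ 2) :=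
        aux_log_lb (σ * u ^ 2) (by positivity)
      have hA : u * (4 + 3 * σ) < 1 := (lt_div_iff₀ (by linarith)).mp huδ
      have hsu : σ * u ^ 2 ≤ u / 3 := by
        nlinarith [hA, mul_pos hupos hupos, hupos]
      have herr : u ^ 4 / (1 - u) ≤ (8 / 7) * u ^ 4 := by
        rw [div_le_iff₀ (by linarith)]
        nlinarith [pow_pos hupos 4]
      have hmain : σ * (u + u ^ 2 / 2)
          < σ * Real.log (1 + u) + Real.log (1 + σ * u ^ 2) := by
        have h1 : σ * u ^ 3 / 3 - σ * ((8 / 7) * u ^ 4) - (σ * u ^ 2) ^ 2 > 0 := by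
          have hu3 : 0 < u ^ 3 := pow_pos hupos 3
          nlinarith [mul_pos (mul_pos hσ hu3) (show (0:ℝ) < 1 - u * (4 + 3*σ) by linarith)]
        nlinarith [mul_le_mul_of_nonneg_left hlog1 hσ.le, hlog2,
          mul_le_mul_of_nonneg_left hsu hσ.le, sq_nonneg (σ * u ^ 2)]
      have hrw : F (1 + u) = Real.exp (σ * Real.log (1 + u) + Real.log (1 + σ * u ^ 2))
          - Real.exp (σ * ((1 + u) ^ 2 - 1) / 2) := by
        rw [hF]
        simp only
        rw [Real.exp_add, ← Real.log_rpow hwpos, Real.exp_log (Real.rpow_pos_of_pos hwpos σ),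
          Real.exp_log (by positivity : (0:ℝ) < 1 + σ * u ^ 2)]
        ring_nf
      rw [hrw, sub_pos, Real.exp_lt_exp]
      calc σ * ((1 + u) ^ 2 - 1) / 2 = σ * (u + u ^ 2 / 2) := by ring
        _ < _ := hmain
    -- F z ≤ 0
    have hFz : F z ≤ 0 := by rw [hF]; simp only; linarith
    rcases eq_or_lt_of_le hFz with heq | hlt
    · have : z = ζ := hζuniq z hz1 (by rw [hF] at heq; simp only at heq; linarith)
      linarith
    · have hivt := intermediate_value_Icc' (le_of_lt hwz) hFcont.continuousOn
      have h0mem : (0 : ℝ) ∈ Set.Icc (F z) (F (1 + u)) := ⟨hlt.le, hFw.le⟩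
      obtain ⟨c, hc, hFc⟩ := hivt h0mem
      have hc1 : 1 < c := lt_of_lt_of_le (by linarith : (1:ℝ) < 1 + u) hc.1
      have hcζ : c = ζ := hζuniq c hc1 (by rw [hF] at hFc; simp only at hFc; linarith)
      have : c ≤ z := hc.2
      linarith
  -- conclude
  rw [hg1, hgz, hJsq]
  have hdiv : Real.exp (σ * (z ^ 2 - 1) / 2) / z ^ σ < σ * (z - 1) ^ 2 + 1 := by
    rw [div_lt_iff₀ hzσpos]
    calc Real.exp (σ * (z ^ 2 - 1) / 2) < z ^ σ * (σ * (z - 1) ^ 2 + 1) := key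
      _ = (σ * (z - 1) ^ 2 + 1) * z ^ σ := by ring
  nlinarith [hdiv]
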